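/- Let R be a commutative domain, σ : R → R a ring endomorphism, and δ : R → R a σ-derivation. If the Ore extension R[x;σ,δ] is a simple ring, then σ = id_R. -/

import Mathlib

/-- `δ` is a `σ`-derivation of `R`: it is additive and satisfies the twisted Leibniz rule
`δ(ab) = σ(a)δ(b) + δ(a)b`. -/
def IsSigmaDerivation {R : Type*} [Ring R] (σ : R →+* R) (δ : R → R) : Prop :=
  (∀ a b : R, δ (a + b) = δ a + δ b) ∧ ∀ a b : R, δ (a * b) = σ a * δ b + δ a * b

/-- `S`, together with the ring morphism `f : R →+* S` and the element `x : S`, is an Ore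
extension `R[x;σ,δ]`: the powers `1, x, x², …` form a basis of `S` as a left `R`-module
(i.e. every element of `S` is, in a unique way, a finite sum `Σᵢ f(aᵢ) xⁱ`), and the
commutation rule `x·r = σ(r)·x + δ(r)` holds for all `r ∈ R`. -/
structure IsOreExtension {R S : Type*} [Ring R] [Ring S]
    (σ : R →+* R) (δ : R → R) (f : R →+* S) (x : S) : Prop where
  basis : Function.Bijective fun a : ℕ →₀ R => a.sum fun i r => f r * x ^ i
  rel : ∀ r : R, x * f r = f (σ r) * x + f (δ r)

/-- `R` is `σ`-`δ`-simple: the only two-sided ideals `J` of `R` with `σ(J) ⊆ J` and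
`δ(J) ⊆ J` are `{0}` and `R`. -/
def IsSigmaDeltaSimple {R : Type*} [Ring R] (σ : R →+* R) (δ : R → R) : Prop :=
  ∀ J : TwoSidedIdeal R, (∀ a ∈ J, σ a ∈ J) → (∀ a ∈ J, δ a ∈ J) → J = ⊥ ∨ J = ⊤

/-- `R` is `δ`-simple: the only two-sided ideals `J` of `R` with `δ(J) ⊆ J` are `{0}`
and `R`. -/
def IsDeltaSimple {R : Type*} [Ring R] (δ : R → R) : Prop :=
  ∀ J : TwoSidedIdeal R, (∀ a ∈ J, δ a ∈ J) → J = ⊥ ∨ J = ⊤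

/-- If `R` is a commutative domain and the Ore extension `R[x;σ,δ]` is simple, then
`σ = id`. -/
theorem stmt_7 {R S : Type*} [CommRing R] [IsDomain R] [Ring S] (σ : R →+* R) (δ : R → R)
    (hδ : IsSigmaDerivation σ δ) (f : R →+* S) (x : S)
    (hS : IsOreExtension σ δ f x) (hsimple : IsSimpleRing S) :
    σ = RingHom.id R := by
  haveI := hsimple
  ext c
  simp only [RingHom.id_apply]
  by_contra hc
  set b : R := σ c - c with hb_def
  have hb : b ≠ 0 := sub_ne_zero.mpr hc
  -- key identity coming from commutativity of R and the Leibniz rule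
  have keyR : ∀ r : R, b * δ r = (σ r - r) * δ c := by
    intro r
    have h1 := hδ.2 r c
    have h2 := hδ.2 c r
    rw [mul_comm r c, h2] at h1
    rw [hb_def]
    linear_combination h1
  set K := FractionRing R with hK
  set i : R →+* K := algebraMap R K with hi
  have hinj : Function.Injective i := IsFractionRing.injective R K
  have hib : i b ≠ 0 := fun h => hb (hinj (by simpa using h))
  set v : K := -(i (δ c)) / i b with hv
  have hvb : v * i b = -(i (δ c)) := div_mul_cancel₀ _ hib
  have keyK : ∀ r : R, v * i r = i (σ r) * v + i (δ r) := by
    intro r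
    apply mul_right_cancel₀ hib
    have h : i b * i (δ r) = (i (σ r) - i r) * i (δ c) := by
      rw [← map_sub, ← map_mul, ← map_mul, keyR r]
    calc v * i r * i b = (v * i b) * i r := by ring
      _ = -(i (δ c)) * i r := by rw [hvb]
      _ = (i (σ r) * v + i (δ r)) * i b := by
          have e1 : (i (σ r) * v + i (δ r)) * i b = i (σ r) * (v * i b) + i (δ r) * i b := by
            ring
          rw [e1, hvb]
          linear_combination -h
  -- the basis machinery
  set g : (ℕ →₀ R) → S := fun a => a.sum fun n r => f r * x ^ n with hg
  have hgbij : Function.Bijective g := hS.basis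
  have hgadd : ∀ a b : ℕ →₀ R, g (a + b) = g a + g b := by
    intro a b
    exact Finsupp.sum_add_index' (fun n => by simp) (fun n r1 r2 => by rw [map_add, add_mul])
  have hg0 : g (0 : ℕ →₀ R) = 0 := Finsupp.sum_zero_index
  have hgsingle : ∀ (n : ℕ) (r : R), g (Finsupp.single n r) = f r * x ^ n := fun n r =>
    Finsupp.sum_single_index (by simp)
  set e : (ℕ →₀ R) ≃ S := Equiv.ofBijective g hgbij with he
  have hgc2 : ∀ s : S, g (e.symm s) = s := fun s => e.apply_symm_apply s
  have hc2g : ∀ a : ℕ →₀ R, e.symm (g a) = a := fun a => e.symm_apply_apply a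
  set ψ : S → K := fun s => (e.symm s).sum fun n r => i r * v ^ n with hψ
  have hψg : ∀ a : ℕ →₀ R, ψ (g a) = a.sum fun n r => i r * v ^ n := by
    intro a; rw [hψ]; simp only; rw [hc2g]
  have hψadd : ∀ s t : S, ψ (s + t) = ψ s + ψ t := by
    intro s t
    have h1 : e.symm (s + t) = e.symm s + e.symm t := by
      apply hgbij.1
      rw [hgadd, hgc2, hgc2, hgc2]
    rw [hψ]; simp only; rw [h1]
    exact Finsupp.sum_add_index' (fun n => by simp) (fun n r1 r2 => by rw [map_add, add_mul])
  have hψ0 : ψ (0 : S) = 0 := by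
    have h1 : e.symm (0 : S) = 0 := by apply hgbij.1; rw [hgc2, hg0]
    rw [hψ]; simp only; rw [h1, Finsupp.sum_zero_index]
  have hψsingle : ∀ (n : ℕ) (r : R), ψ (f r * x ^ n) = i r * v ^ n := by
    intro n r
    rw [← hgsingle, hψg, Finsupp.sum_single_index (by simp)]
  -- Lemma A : ψ (x * s) = v * ψ s
  have hA : ∀ s : S, ψ (x * s) = v * ψ s := by
    intro s
    rw [← hgc2 s]
    generalize e.symm s = a
    induction a using Finsupp.induction with
    | zero => rw [hg0, mul_zero, hψ0, mul_zero]
    | single_add n r a hn hr ih =>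
      rw [hgadd, mul_add, hψadd, hψadd, ih, mul_add]
      congr 1
      have hx : x * (f r * x ^ n) = f (σ r) * x ^ (n + 1) + f (δ r) * x ^ n := by
        rw [← mul_assoc, hS.rel r, add_mul, mul_assoc, ← pow_succ']
      rw [hgsingle, hx, hψadd, hψsingle, hψsingle, hψsingle]
      linear_combination -(v ^ n) * keyK r
  have hApow : ∀ (n : ℕ) (s : S), ψ (x ^ n * s) = v ^ n * ψ s := by
    intro n
    induction n with
    | zero => intro s; simp
    | succ n ih =>
      intro s
      rw [pow_succ', mul_assoc, hA, ih, ← mul_assoc, ← pow_succ']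
  -- Lemma B : ψ (f a * s) = i a * ψ s
  have hB : ∀ (r0 : R) (s : S), ψ (f r0 * s) = i r0 * ψ s := by
    intro r0 s
    rw [← hgc2 s]
    generalize e.symm s = a
    induction a using Finsupp.induction with
    | zero => rw [hg0, mul_zero, hψ0, mul_zero]
    | single_add n r a hn hr ih =>
      rw [hgadd, mul_add, hψadd, hψadd, ih, mul_add]
      congr 1
      rw [hgsingle, ← mul_assoc, ← map_mul, hψsingle, hψsingle, map_mul, mul_assoc]
  -- multiplicativity
  have hC : ∀ s t : S, ψ (s * t) = ψ s * ψ t := by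
    intro s t
    rw [← hgc2 s]
    generalize e.symm s = a
    induction a using Finsupp.induction with
    | zero => rw [hg0, zero_mul, hψ0, zero_mul]
    | single_add n r a hn hr ih =>
      rw [hgadd, add_mul, hψadd, hψadd, ih, add_mul]
      congr 1
      rw [hgsingle, mul_assoc, hB, hApow, hψsingle, mul_assoc]
  have hψ1 : ψ (1 : S) = 1 := by
    have h1 : (1 : S) = f 1 * x ^ 0 := by simp
    rw [h1, hψsingle]; simp
  set Ψ : S →+* K :=
    { toFun := ψ, map_one' := hψ1, map_mul' := hC, map_zero' := hψ0, map_add' := hψadd } with hΨ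
  set z : S := x * f c - f c * x with hz_def
  have hz0 : Ψ z = 0 := by
    rw [hz_def, map_sub, map_mul, map_mul, mul_comm, sub_self]
  have hzne : z ≠ 0 := by
    have hzeq : z = g (Finsupp.single 1 b + Finsupp.single 0 (δ c)) := by
      rw [hgadd, hgsingle, hgsingle, pow_one, pow_zero, mul_one, hz_def, hS.rel c, hb_def,
        map_sub, sub_mul]
      abel
    intro h
    have h2 : Finsupp.single 1 b + Finsupp.single 0 (δ c) = (0 : ℕ →₀ R) := by
      apply hgbij.1
      rw [← hzeq, h, hg0]
    have h3 := DFunLike.congr_fun h2 1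
    simp [Finsupp.single_apply] at h3
    exact hb h3
  have hinjΨ : Function.Injective Ψ := RingHom.injective Ψ
  exact hzne (hinjΨ (by rw [hz0, map_zero]))
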